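/- Let γ = U(Φ⁺_{d_k} ⊗ ρ_{A'B'})U† be a strictly irreducible private state with twisting U = Σ_i |ii⟩⟨ii|⊗U_i and each U_i ρ U_i† separable, and fix ε ∈ [0,1]. Then the ε-hypothesis-testing relative entropy of entanglement satisfies inf_{σ ∈ SEP} D_h^ε(γ ∥ σ) ≤ log₂ d_k − log₂(1 − ε). -/

import Mathlib

open Matrix
open scoped BigOperators ComplexOrder

noncomputable section

namespace KeyCost

/-- A density operator: positive semidefinite with unit trace. -/
def IsDensity {n : Type*} [Fintype n] (M : Matrix n n ℂ) : Prop :=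
  M.PosSemidef ∧ M.trace = 1

/-- Von Neumann entropy (base 2), via eigenvalues of a Hermitian matrix. -/
noncomputable def vNEntropy {n : Type*} [Fintype n] [DecidableEq n] (M : Matrix n n ℂ) : ℝ :=
  if h : M.IsHermitian then -∑ i, h.eigenvalues i * Real.logb 2 (h.eigenvalues i) else 0

/-- Matrix logarithm (base 2) of a Hermitian matrix via the spectral theorem. -/
noncomputable def matLog {n : Type*} [Fintype n] [DecidableEq n] (M : Matrix n n ℂ) : Matrix n n ℂ :=
  if h : M.IsHermitian then
    (h.eigenvectorUnitary : Matrix n n ℂ) *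
      Matrix.diagonal (fun i => (Real.logb 2 (h.eigenvalues i) : ℂ)) *
      (h.eigenvectorUnitary : Matrix n n ℂ)ᴴ
  else 0

/-- Quantum relative entropy  D(ρ‖σ) = Tr[ρ (log ρ − log σ)]  (base 2). -/
noncomputable def relEnt {n : Type*} [Fintype n] [DecidableEq n] (ρ σ : Matrix n n ℂ) : ℝ :=
  ((ρ * (matLog ρ - matLog σ)).trace).re

/-- Partial trace over the second (Bob's) factor. -/
def ptraceRight {α β : Type*} [Fintype β] (M : Matrix (α × β) (α × β) ℂ) : Matrix α α ℂ :=
  Matrix.of fun a a' => ∑ b, M (a, b) (a', b)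

/-- Tensor (Kronecker) product of two square matrices, on the product index type. -/
def prodMat {α β : Type*} (A : Matrix α α ℂ) (B : Matrix β β ℂ) : Matrix (α × β) (α × β) ℂ :=
  Matrix.of fun p q => A p.1 q.1 * B p.2 q.2

/-- Separability across the `α : β` cut. -/
def IsSeparable {α β : Type*} [Fintype α] [Fintype β] (σ : Matrix (α × β) (α × β) ℂ) : Prop :=
  ∃ (m : ℕ) (p : Fin m → ℝ) (a : Fin m → Matrix α α ℂ) (b : Fin m → Matrix β β ℂ),
    (∀ k, 0 ≤ p k) ∧ (∑ k, p k = 1) ∧ (∀ k, IsDensity (a k)) ∧ (∀ k, IsDensity (b k)) ∧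
    σ = ∑ k, (p k : ℂ) • prodMat (a k) (b k)

/-- Trace norm of a Hermitian matrix (sum of absolute values of eigenvalues). -/
noncomputable def traceNorm {n : Type*} [Fintype n] [DecidableEq n] (M : Matrix n n ℂ) : ℝ :=
  if h : M.IsHermitian then ∑ i, |h.eigenvalues i| else 0

/-- Normalized trace distance (1/2)‖ρ − σ‖₁. -/
noncomputable def traceDist {n : Type*} [Fintype n] [DecidableEq n] (ρ σ : Matrix n n ℂ) : ℝ :=
  (1 / 2) * traceNorm (ρ - σ)

/-- Product Kraus operator E ⊗ F. -/
def locKraus {dA dB dA' dB' : Type*} (E : Matrix dA' dA ℂ) (F : Matrix dB' dB ℂ) :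
    Matrix (dA' × dB') (dA × dB) ℂ :=
  Matrix.of fun p q => E p.1 q.1 * F p.2 q.2

/-- LOCC channel (modelled by its Kraus decomposition into product operators). -/
def IsLOCC {dA dB dA' dB' : Type*} [Fintype dA] [Fintype dB] [Fintype dA'] [Fintype dB']
    [DecidableEq dA] [DecidableEq dB] [DecidableEq dA'] [DecidableEq dB']
    (Λ : Matrix (dA × dB) (dA × dB) ℂ → Matrix (dA' × dB') (dA' × dB') ℂ) : Prop :=
  ∃ (m : ℕ) (E : Fin m → Matrix dA' dA ℂ) (F : Fin m → Matrix dB' dB ℂ),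
    (∑ x, (locKraus (E x) (F x))ᴴ * locKraus (E x) (F x) = 1) ∧
    ∀ ρ, Λ ρ = ∑ x, locKraus (E x) (F x) * ρ * (locKraus (E x) (F x))ᴴ

/-- The Hilbert space of a private state with key dimension `dk` and shield dimension `ds`:
Alice holds `Fin dk × Fin ds`, Bob holds `Fin dk × Fin ds`. -/
abbrev SIRSpace (dk ds : ℕ) := (Fin dk × Fin ds) × (Fin dk × Fin ds)

/-- Strictly irreducible private state
`γ = (1/dk) Σ_{i,j} |ii⟩⟨jj| ⊗ U_i ρS U_j†` with each `U_i ρS U_i†` separable. -/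
def IsSIR {dk ds : ℕ} (γ : Matrix (SIRSpace dk ds) (SIRSpace dk ds) ℂ) : Prop :=
  ∃ (U : Fin dk → Matrix (Fin ds × Fin ds) (Fin ds × Fin ds) ℂ)
    (ρS : Matrix (Fin ds × Fin ds) (Fin ds × Fin ds) ℂ),
    (∀ i, U i ∈ Matrix.unitaryGroup (Fin ds × Fin ds) ℂ) ∧
    IsDensity ρS ∧
    (∀ i, IsSeparable (U i * ρS * (U i)ᴴ)) ∧
    ∀ p q : SIRSpace dk ds,
      γ p q =
        if p.1.1 = p.2.1 ∧ q.1.1 = q.2.1 then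
          (1 / (dk : ℂ)) * (U p.1.1 * ρS * (U q.1.1)ᴴ) (p.1.2, p.2.2) (q.1.2, q.2.2)
        else 0

/-- One-shot key cost. -/
noncomputable def KCone {dA dB : Type*} [Fintype dA] [Fintype dB] [DecidableEq dA] [DecidableEq dB]
    (ε : ℝ) (ρ : Matrix (dA × dB) (dA × dB) ℂ) : ℝ :=
  sInf {r : ℝ | ∃ (dk ds : ℕ) (γ : Matrix (SIRSpace dk ds) (SIRSpace dk ds) ℂ)
      (Λ : Matrix (SIRSpace dk ds) (SIRSpace dk ds) ℂ → Matrix (dA × dB) (dA × dB) ℂ),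
      IsSIR γ ∧ IsLOCC Λ ∧ traceDist (Λ γ) ρ ≤ ε ∧ r = Real.logb 2 dk}

/-- One-shot distillable key. -/
noncomputable def KDone {dA dB : Type*} [Fintype dA] [Fintype dB] [DecidableEq dA] [DecidableEq dB]
    (ε : ℝ) (ρ : Matrix (dA × dB) (dA × dB) ℂ) : ℝ :=
  sSup {r : ℝ | ∃ (dk ds : ℕ) (γ : Matrix (SIRSpace dk ds) (SIRSpace dk ds) ℂ)
      (Λ : Matrix (dA × dB) (dA × dB) ℂ → Matrix (SIRSpace dk ds) (SIRSpace dk ds) ℂ),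
      IsSIR γ ∧ IsLOCC Λ ∧ traceDist (Λ ρ) γ ≤ ε ∧ r = Real.logb 2 dk}

/-- n-fold tensor power of a bipartite state, with the bipartite cut `A^n : B^n`. -/
def powState {dA dB : Type*} [Fintype dA] [Fintype dB]
    (ρ : Matrix (dA × dB) (dA × dB) ℂ) (n : ℕ) :
    Matrix ((Fin n → dA) × (Fin n → dB)) ((Fin n → dA) × (Fin n → dB)) ℂ :=
  Matrix.of fun p q => ∏ i, ρ (p.1 i, p.2 i) (q.1 i, q.2 i)

/-- Asymptotic key cost. -/
noncomputable def KCost {dA dB : Type*} [Fintype dA] [Fintype dB] [DecidableEq dA] [DecidableEq dB]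
    (ρ : Matrix (dA × dB) (dA × dB) ℂ) : ℝ :=
  ⨆ ε ∈ Set.Ioo (0 : ℝ) 1,
    Filter.limsup (fun n : ℕ => KCone ε (powState ρ n) / n) Filter.atTop

/-- Relative entropy of entanglement. -/
noncomputable def ER {α β : Type*} [Fintype α] [Fintype β] [DecidableEq α] [DecidableEq β]
    (ρ : Matrix (α × β) (α × β) ℂ) : ℝ :=
  sInf {x : ℝ | ∃ σ : Matrix (α × β) (α × β) ℂ, IsSeparable σ ∧ x = relEnt ρ σ}

/-- ε-hypothesis-testing relative entropy. -/
noncomputable def Dh {n : Type*} [Fintype n] [DecidableEq n] (ε : ℝ) (ρ σ : Matrix n n ℂ) : ℝ :=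
  -Real.logb 2 (sInf {x : ℝ | ∃ Λ : Matrix n n ℂ, Λ.PosSemidef ∧ (1 - Λ).PosSemidef ∧
      1 - ε ≤ ((Λ * ρ).trace).re ∧ x = ((Λ * σ).trace).re})

/-- A strictly irreducible generalized private state with key-part entropy `h`:
up to local unitaries and index reshuffling it has the canonical twisted form
`Σ_{i,j} √(μ_i μ_j) |e_i f_i⟩⟨e_j f_j| ⊗ U_i ρS U_j†` with separable conditional shields. -/
def IsGSIRwithEnt {dA dB : Type*} [Fintype dA] [Fintype dB] [DecidableEq dA] [DecidableEq dB]
    (γ : Matrix (dA × dB) (dA × dB) ℂ) (h : ℝ) : Prop :=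
  ∃ (k sA sB : ℕ) (eA : dA ≃ Fin k × Fin sA) (eB : dB ≃ Fin k × Fin sB)
    (VA : Matrix dA dA ℂ) (VB : Matrix dB dB ℂ)
    (μ : Fin k → ℝ) (U : Fin k → Matrix (Fin sA × Fin sB) (Fin sA × Fin sB) ℂ)
    (ρS : Matrix (Fin sA × Fin sB) (Fin sA × Fin sB) ℂ),
    VA ∈ Matrix.unitaryGroup dA ℂ ∧ VB ∈ Matrix.unitaryGroup dB ℂ ∧
    (∀ i, 0 ≤ μ i) ∧ (∑ i, μ i = 1) ∧
    (∀ i, U i ∈ Matrix.unitaryGroup (Fin sA × Fin sB) ℂ) ∧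
    IsDensity ρS ∧
    (∀ i, IsSeparable (U i * ρS * (U i)ᴴ)) ∧
    (∀ p q : dA × dB,
      (prodMat VA VB * γ * (prodMat VA VB)ᴴ) p q =
        if (eA p.1).1 = (eB p.2).1 ∧ (eA q.1).1 = (eB q.2).1 then
          (Real.sqrt (μ (eA p.1).1 * μ (eA q.1).1) : ℂ) *
            (U (eA p.1).1 * ρS * (U (eA q.1).1)ᴴ) ((eA p.1).2, (eB p.2).2) ((eA q.1).2, (eB q.2).2)
        else 0) ∧
    h = -∑ i, μ i * Real.logb 2 (μ i)

/-- A strictly irreducible generalized private state. -/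
def IsGSIR {dA dB : Type*} [Fintype dA] [Fintype dB] [DecidableEq dA] [DecidableEq dB]
    (γ : Matrix (dA × dB) (dA × dB) ℂ) : Prop :=
  ∃ h, IsGSIRwithEnt γ h

/-- Key of formation: infimum of the average key-part entropy over finite decompositions
into strictly irreducible generalized private states. -/
noncomputable def KF {dA dB : Type*} [Fintype dA] [Fintype dB] [DecidableEq dA] [DecidableEq dB]
    (ρ : Matrix (dA × dB) (dA × dB) ℂ) : ℝ :=
  sInf {r : ℝ | ∃ (N : ℕ) (p : Fin N → ℝ) (γ : Fin N → Matrix (dA × dB) (dA × dB) ℂ)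
      (h : Fin N → ℝ),
      (∀ k, 0 ≤ p k) ∧ (∑ k, p k = 1) ∧ (∀ k, IsDensity (γ k)) ∧
      (∀ k, IsGSIRwithEnt (γ k) (h k)) ∧ (∑ k, (p k : ℂ) • γ k = ρ) ∧
      r = ∑ k, p k * h k}



/-! ### Auxiliary lemmas for Statement 11 -/

lemma psd_diag_nonneg {n : Type*} [Fintype n] [DecidableEq n] {M : Matrix n n ℂ}
    (hM : M.PosSemidef) (i : n) : 0 ≤ M i i := by
  have h := hM.dotProduct_mulVec_nonneg (Pi.single i 1)
  simpa [dotProduct, mulVec, Pi.single_apply, mul_ite, ite_mul] using h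

lemma psd_trace_nonneg {n : Type*} [Fintype n] [DecidableEq n] {M : Matrix n n ℂ}
    (hM : M.PosSemidef) : 0 ≤ M.trace :=
  Finset.sum_nonneg fun i _ => psd_diag_nonneg hM i

lemma psd_trace_mul_nonneg {n : Type*} [Fintype n] [DecidableEq n] {A B : Matrix n n ℂ}
    (hA : A.PosSemidef) (hB : B.PosSemidef) : 0 ≤ (A * B).trace := by
  obtain ⟨C, hC⟩ : ∃ C : Matrix n n ℂ, B = Cᴴ * C := by
    open scoped MatrixOrder in exact CStarAlgebra.nonneg_iff_eq_star_mul_self.mp hB.nonneg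
  have h : (A * B).trace = (C * A * Cᴴ).trace := by
    rw [hC, ← mul_assoc, Matrix.trace_mul_cycle]
  rw [h]
  exact psd_trace_nonneg (hA.mul_mul_conjTranspose_same C)

lemma psd_smul {n : Type*} [Fintype n] {M : Matrix n n ℂ} {c : ℝ} (hc : 0 ≤ c)
    (hM : M.PosSemidef) : ((c:ℂ) • M).PosSemidef := by
  refine Matrix.PosSemidef.of_dotProduct_mulVec_nonneg ?_ ?_
  · have h1 := hM.1
    unfold Matrix.IsHermitian at *
    rw [conjTranspose_smul, h1]
    simp [Complex.conj_ofReal]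
  · intro x
    rw [smul_mulVec, dotProduct_smul, smul_eq_mul]
    exact mul_nonneg (Complex.zero_le_real.mpr hc) (hM.dotProduct_mulVec_nonneg x)

lemma prodMat_posSemidef {α β : Type*} [Fintype α] [Fintype β] [DecidableEq α] [DecidableEq β]
    {A : Matrix α α ℂ} {B : Matrix β β ℂ} (hA : A.PosSemidef) (hB : B.PosSemidef) :
    (prodMat A B).PosSemidef := by
  obtain ⟨E, hE⟩ : ∃ E : Matrix α α ℂ, A = Eᴴ * E := by
    open scoped MatrixOrder in exact CStarAlgebra.nonneg_iff_eq_star_mul_self.mp hA.nonneg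
  obtain ⟨F, hF⟩ : ∃ F : Matrix β β ℂ, B = Fᴴ * F := by
    open scoped MatrixOrder in exact CStarAlgebra.nonneg_iff_eq_star_mul_self.mp hB.nonneg
  have h : prodMat A B = (prodMat E F)ᴴ * prodMat E F := by
    ext p q
    simp only [prodMat, Matrix.mul_apply, conjTranspose_apply, of_apply, hE, hF]
    rw [Fintype.sum_prod_type, Finset.sum_mul_sum]
    refine Finset.sum_congr rfl fun r1 _ => Finset.sum_congr rfl fun r2 _ => ?_
    simp only [star_mul']
    ring
  rw [h]
  exact Matrix.posSemidef_conjTranspose_mul_self _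

lemma prodMat_trace {α β : Type*} [Fintype α] [Fintype β]
    (A : Matrix α α ℂ) (B : Matrix β β ℂ) :
    (prodMat A B).trace = A.trace * B.trace := by
  simp only [Matrix.trace, Matrix.diag, prodMat, of_apply]
  rw [Fintype.sum_prod_type, Finset.sum_mul_sum]

lemma isSeparable_density {α β : Type*} [Fintype α] [Fintype β] [DecidableEq α] [DecidableEq β]
    {σ : Matrix (α × β) (α × β) ℂ} (h : IsSeparable σ) : IsDensity σ := by
  obtain ⟨m, p, a, b, hp, hp1, ha, hb, rfl⟩ := h
  constructor
  · refine Finset.sum_induction _ _ (fun x y hx hy => hx.add hy) Matrix.PosSemidef.zero ?_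
    intro k _
    exact psd_smul (hp k) (prodMat_posSemidef (ha k).1 (hb k).1)
  · rw [Matrix.trace_sum]
    simp only [Matrix.trace_smul, prodMat_trace, (fun k => (ha k).2), (fun k => (hb k).2)]
    simp only [mul_one, smul_eq_mul]
    rw [← Complex.ofReal_sum]
    norm_cast

lemma isSeparable_convex {α β : Type*} [Fintype α] [Fintype β] {N : ℕ} (c : Fin N → ℝ)
    (σ : Fin N → Matrix (α × β) (α × β) ℂ) (hc : ∀ i, 0 ≤ c i) (hc1 : ∑ i, c i = 1)
    (hσ : ∀ i, IsSeparable (σ i)) : IsSeparable (∑ i, (c i : ℂ) • σ i) := by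
  choose m p a b hp hp1 ha hb hdec using hσ
  classical
  let e := Fintype.equivFin (Σ i : Fin N, Fin (m i))
  refine ⟨Fintype.card (Σ i : Fin N, Fin (m i)),
    fun k => c (e.symm k).1 * p _ (e.symm k).2,
    fun k => a _ (e.symm k).2, fun k => b _ (e.symm k).2,
    fun k => mul_nonneg (hc _) (hp _ _), ?_, fun k => ha _ _, fun k => hb _ _, ?_⟩
  · beta_reduce
    rw [e.symm.sum_comp (fun x => c x.1 * p x.1 x.2)]
    rw [← Finset.univ_sigma_univ, Finset.sum_sigma]
    simp_rw [← Finset.mul_sum, hp1, mul_one, hc1]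
  · beta_reduce
    rw [e.symm.sum_comp (fun x => ((c x.1 * p x.1 x.2 : ℝ) : ℂ) • prodMat (a x.1 x.2) (b x.1 x.2))]
    rw [← Finset.univ_sigma_univ, Finset.sum_sigma]
    refine Finset.sum_congr rfl fun i _ => ?_
    rw [hdec i, Finset.smul_sum]
    refine Finset.sum_congr rfl fun j _ => ?_
    push_cast
    rw [smul_smul]

/-- embed a shield-matrix into key block (i,i)-(i,i) -/
def embedKey {dk ds : ℕ} (i : Fin dk) (τ : Matrix (Fin ds × Fin ds) (Fin ds × Fin ds) ℂ) :
    Matrix (SIRSpace dk ds) (SIRSpace dk ds) ℂ :=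
  Matrix.of fun p q =>
    if p.1.1 = i ∧ p.2.1 = i ∧ q.1.1 = i ∧ q.2.1 = i then
      τ (p.1.2, p.2.2) (q.1.2, q.2.2) else 0

lemma stdBasis_density {dk : ℕ} (i : Fin dk) :
    IsDensity (Matrix.single i i 1 : Matrix (Fin dk) (Fin dk) ℂ) := by
  refine ⟨Matrix.PosSemidef.of_dotProduct_mulVec_nonneg ?_ ?_, ?_⟩
  · ext j k
    simp only [Matrix.conjTranspose_apply, Matrix.single, of_apply]
    by_cases hj : i = j <;> by_cases hk : i = k <;> simp [hj, hk]
  · intro x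
    have h1 : (Matrix.single i i 1 : Matrix (Fin dk) (Fin dk) ℂ) *ᵥ x =
        fun j => if i = j then x i else 0 := by
      funext j
      simp [Matrix.mulVec, Matrix.single, dotProduct, ite_and]
    rw [h1]
    have h2 : star x ⬝ᵥ (fun j => if i = j then x i else 0) = star (x i) * x i := by
      simp [dotProduct, mul_ite, mul_zero, Finset.sum_ite_eq]
    rw [h2]
    exact star_mul_self_nonneg _
  · simp [Matrix.trace, Matrix.diag, Matrix.single, ite_and]

lemma isSeparable_embedKey {dk ds : ℕ} (i : Fin dk)
    {τ : Matrix (Fin ds × Fin ds) (Fin ds × Fin ds) ℂ} (hτ : IsSeparable τ) :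
    IsSeparable (embedKey i τ) := by
  obtain ⟨m, p, a, b, hp, hp1, ha, hb, hdec⟩ := hτ
  refine ⟨m, p, fun k => prodMat (Matrix.single i i 1) (a k),
    fun k => prodMat (Matrix.single i i 1) (b k), hp, hp1, ?_, ?_, ?_⟩
  · intro k
    exact ⟨prodMat_posSemidef (stdBasis_density i).1 (ha k).1,
      by rw [prodMat_trace, (stdBasis_density i).2, (ha k).2, one_mul]⟩
  · intro k
    exact ⟨prodMat_posSemidef (stdBasis_density i).1 (hb k).1,
      by rw [prodMat_trace, (stdBasis_density i).2, (hb k).2, one_mul]⟩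
  · ext p q
    obtain ⟨⟨j1, s1⟩, j2, s2⟩ := p
    obtain ⟨⟨j3, u1⟩, j4, u2⟩ := q
    have hτe := congrFun (congrFun hdec (s1, s2)) (u1, u2)
    simp only [Matrix.sum_apply, Matrix.smul_apply, of_apply, smul_eq_mul] at hτe
    simp only [embedKey, of_apply, prodMat, Matrix.sum_apply, Matrix.smul_apply,
      Matrix.single, smul_eq_mul]
    by_cases hj1 : j1 = i <;> by_cases hj2 : j2 = i <;>
      by_cases hj3 : j3 = i <;> by_cases hj4 : j4 = i <;>
      simp only [hj1, hj2, hj3, hj4, and_true, and_false, false_and, true_and,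
        if_true, if_false, ite_true, ite_false, one_mul, mul_one, zero_mul, mul_zero,
        Finset.sum_const_zero, if_neg, eq_self_iff_true] <;>
      first
      | (rw [hτe]; simp only [prodMat, of_apply, mul_assoc])
      | (split_ifs <;> simp_all)

lemma dh_nonneg {n : Type*} [Fintype n] [DecidableEq n] {ε : ℝ} (hε0 : 0 ≤ ε)
    {ρ σ : Matrix n n ℂ} (hρ : ρ.trace = 1) (hσd : IsDensity σ) : 0 ≤ Dh ε ρ σ := by
  have mem1 : (1 : ℝ) ∈ {x : ℝ | ∃ Λ : Matrix n n ℂ, Λ.PosSemidef ∧ (1 - Λ).PosSemidef ∧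
      1 - ε ≤ ((Λ * ρ).trace).re ∧ x = ((Λ * σ).trace).re} := by
    refine ⟨1, Matrix.PosSemidef.one, by rw [sub_self]; exact Matrix.PosSemidef.zero, ?_, ?_⟩
    · rw [one_mul, hρ]; simpa using hε0
    · rw [one_mul, hσd.2]; simp
  have hnn : ∀ x ∈ {x : ℝ | ∃ Λ : Matrix n n ℂ, Λ.PosSemidef ∧ (1 - Λ).PosSemidef ∧
      1 - ε ≤ ((Λ * ρ).trace).re ∧ x = ((Λ * σ).trace).re}, 0 ≤ x := by
    rintro x ⟨Λ, hΛ, -, -, rfl⟩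
    exact (Complex.le_def.mp (psd_trace_mul_nonneg hΛ hσd.1)).1
  rw [Dh, neg_nonneg]
  refine Real.logb_nonpos one_lt_two ?_ ?_
  · exact le_csInf ⟨1, mem1⟩ hnn
  · exact csInf_le ⟨0, hnn⟩ mem1

set_option maxHeartbeats 1000000 in
/-- for a strictly irreducible private state `γ` with key dimension `dk`
and `ε ∈ [0,1]`, the ε-hypothesis-testing relative entropy of entanglement obeys
`inf_{σ ∈ SEP} D_h^ε(γ‖σ) ≤ log₂ dk − log₂(1−ε)`. -/
theorem sir_hypothesis_testing_bound (dk ds : ℕ) (hdk : 1 ≤ dk) (hds : 1 ≤ ds)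
    (γ : Matrix (SIRSpace dk ds) (SIRSpace dk ds) ℂ) (hγ : IsSIR γ)
    (ε : ℝ) (hε : ε ∈ Set.Icc (0 : ℝ) 1) :
    sInf {x : ℝ | ∃ σ : Matrix (SIRSpace dk ds) (SIRSpace dk ds) ℂ,
        IsSeparable σ ∧ x = Dh ε γ σ} ≤
      Real.logb 2 dk - Real.logb 2 (1 - ε) := by
  classical
  obtain ⟨U, ρS, hU, hρS, hsepU, hγe⟩ := hγ
  have hdkR : (0:ℝ) < dk := by exact_mod_cast Nat.lt_of_lt_of_le Nat.zero_lt_one hdk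
  have hdkC : (dk:ℂ) ≠ 0 := by
    exact Nat.cast_ne_zero.mpr (by omega : dk ≠ 0)
  set T : Fin dk → Fin dk → Matrix (Fin ds × Fin ds) (Fin ds × Fin ds) ℂ :=
    fun i j => U i * ρS * (U j)ᴴ with hTdef
  have hTtr : ∀ i, (T i i).trace = 1 := by
    intro i
    calc (U i * ρS * (U i)ᴴ).trace = ((U i)ᴴ * (U i) * ρS).trace := by
          rw [Matrix.trace_mul_cycle]
      _ = 1 := by
          rw [← Matrix.star_eq_conjTranspose, Unitary.star_mul_self_of_mem (hU i), one_mul, hρS.2]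
  -- trace of γ
  have hγtr : γ.trace = 1 := by
    have hdiag : ∀ (i : Fin dk) (s : Fin ds) (j : Fin dk) (t : Fin ds),
        γ ((i,s),(j,t)) ((i,s),(j,t)) = if i = j then (1/(dk:ℂ)) * T i i (s,t) (s,t) else 0 := by
      intro i s j t
      rw [hγe]
      by_cases h : i = j
      · subst h; rw [if_pos ⟨rfl, rfl⟩, if_pos rfl]
      · rw [if_neg (fun hc => h hc.1), if_neg h]
    have hTtr' : ∀ i, ∑ s, ∑ t, T i i (s, t) (s, t) = 1 := by
      intro i; have h := hTtr i; rwa [Matrix.trace, Fintype.sum_prod_type] at h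
    calc γ.trace = ∑ i, ∑ s, ∑ j, ∑ t, γ ((i,s),(j,t)) ((i,s),(j,t)) := by
          simp only [Matrix.trace, Matrix.diag_apply, Fintype.sum_prod_type]
      _ = ∑ i, ∑ s : Fin ds, ∑ t, (1/(dk:ℂ)) * T i i (s,t) (s,t) := by
          refine Finset.sum_congr rfl fun i _ => Finset.sum_congr rfl fun u _ => ?_
          simp_rw [hdiag]
          rw [Finset.sum_comm]
          simp
      _ = ∑ i : Fin dk, (1/(dk:ℂ)) := by
          refine Finset.sum_congr rfl fun i _ => ?_
          simp_rw [← Finset.mul_sum]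
          rw [hTtr' i, mul_one]
      _ = 1 := by
          rw [Finset.sum_const, Finset.card_univ, Fintype.card_fin, nsmul_eq_mul]
          field_simp
  -- block operators
  set B : Fin dk → Matrix (SIRSpace dk ds) (Fin ds × Fin ds) ℂ :=
    fun i => Matrix.of fun p w =>
      if p.1.1 = i ∧ p.2.1 = i then U i (p.1.2, p.2.2) w else 0 with hBdef
  have hBmul : ∀ i j, ∀ p q : SIRSpace dk ds, (B i * ρS * (B j)ᴴ) p q =
      if (p.1.1 = i ∧ p.2.1 = i) ∧ (q.1.1 = j ∧ q.2.1 = j) then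
        T i j (p.1.2, p.2.2) (q.1.2, q.2.2) else 0 := by
    intro i j p q
    by_cases hp : p.1.1 = i ∧ p.2.1 = i <;> by_cases hq : q.1.1 = j ∧ q.2.1 = j <;>
      simp [hBdef, hTdef, Matrix.mul_apply, Matrix.conjTranspose_apply, hp, hq,
        Finset.sum_mul, mul_ite, ite_mul, mul_zero, zero_mul]
  have hBE : ∀ i, B i * ρS * (B i)ᴴ = embedKey i (T i i) := by
    intro i; ext p q
    rw [hBmul i i p q]
    simp [embedKey, and_assoc]
  -- the separable state σ
  set σ : Matrix (SIRSpace dk ds) (SIRSpace dk ds) ℂ :=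
    ∑ i, ((1/(dk:ℝ) : ℝ) : ℂ) • embedKey i (T i i) with hσdef
  have hσsep : IsSeparable σ := by
    refine isSeparable_convex _ _ (fun i => by positivity) ?_
      (fun i => isSeparable_embedKey i (hsepU i))
    rw [Finset.sum_const, Finset.card_univ, Fintype.card_fin, nsmul_eq_mul]
    field_simp
  have hσdens := isSeparable_density hσsep
  -- dk•σ is the sum of diagonal blocks
  have hdkσ : (dk:ℂ) • σ = ∑ i, B i * ρS * (B i)ᴴ := by
    rw [hσdef, Finset.smul_sum]
    refine Finset.sum_congr rfl fun i _ => ?_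
    rw [hBE, smul_smul]
    rw [show ((dk:ℂ) * ((1/(dk:ℝ) : ℝ) : ℂ)) = 1 by push_cast; field_simp]
    rw [one_smul]
  -- dk•γ is the full double sum
  have hγD : (dk:ℂ) • γ = ∑ i, ∑ j, B i * ρS * (B j)ᴴ := by
    ext p q
    simp only [Matrix.smul_apply, Matrix.sum_apply, smul_eq_mul]
    rw [hγe p q]
    have inner : ∀ i, (∑ j, (B i * ρS * (B j)ᴴ) p q) =
        if (p.1.1 = i ∧ p.2.1 = i) ∧ q.1.1 = q.2.1 then
          T i q.1.1 (p.1.2, p.2.2) (q.1.2, q.2.2) else 0 := by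
      intro i
      by_cases hq : q.1.1 = q.2.1
      · by_cases hp : p.1.1 = i ∧ p.2.1 = i
        · rw [if_pos ⟨hp, hq⟩]
          rw [Finset.sum_eq_single q.1.1]
          · rw [hBmul, if_pos ⟨hp, rfl, hq.symm⟩]
          · intro b _ hb
            rw [hBmul, if_neg]
            rintro ⟨-, hb1, -⟩
            exact hb hb1.symm
          · intro h; exact absurd (Finset.mem_univ _) h
        · rw [if_neg (fun hc => hp hc.1)]
          refine Finset.sum_eq_zero fun j _ => ?_
          rw [hBmul, if_neg (fun hc => hp hc.1)]
      · rw [if_neg (fun hc => hq hc.2)]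
        refine Finset.sum_eq_zero fun j _ => ?_
        rw [hBmul, if_neg]
        rintro ⟨-, h3, h4⟩
        exact hq (h3.trans h4.symm)
    rw [Finset.sum_congr rfl fun i _ => inner i]
    by_cases hc : p.1.1 = p.2.1 ∧ q.1.1 = q.2.1
    · rw [if_pos hc]
      rw [Finset.sum_eq_single p.1.1]
      · rw [if_pos ⟨⟨rfl, hc.1.symm⟩, hc.2⟩]
        field_simp
        rfl
      · intro b _ hb
        rw [if_neg]
        rintro ⟨⟨hb1, -⟩, -⟩
        exact hb hb1.symm
      · intro h; exact absurd (Finset.mem_univ _) h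
    · rw [if_neg hc, mul_zero]
      refine (Finset.sum_eq_zero fun i _ => ?_).symm
      rw [if_neg]
      rintro ⟨⟨h1, h2⟩, h3⟩
      exact hc ⟨h1.trans h2.symm, h3⟩
  -- positivity of dk•σ - γ
  have hscaled : ∑ i, ∑ j, ((B i - B j) * ρS * (B i - B j)ᴴ) =
      (2*(dk:ℂ)) • ((dk:ℂ) • σ - γ) := by
    have expand : ∀ i j : Fin dk, (B i - B j) * ρS * (B i - B j)ᴴ =
        (B i * ρS * (B i)ᴴ + B j * ρS * (B j)ᴴ) -
          (B i * ρS * (B j)ᴴ + B j * ρS * (B i)ᴴ) := by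
      intro i j
      rw [Matrix.conjTranspose_sub, Matrix.sub_mul, Matrix.sub_mul, Matrix.mul_sub,
        Matrix.mul_sub]
      abel
    calc ∑ i, ∑ j, ((B i - B j) * ρS * (B i - B j)ᴴ)
        = ∑ i, ∑ j, ((B i * ρS * (B i)ᴴ + B j * ρS * (B j)ᴴ) -
            (B i * ρS * (B j)ᴴ + B j * ρS * (B i)ᴴ)) := by simp_rw [expand]
      _ = ((∑ i, ∑ _j : Fin dk, B i * ρS * (B i)ᴴ) + ∑ _i : Fin dk, ∑ j, B j * ρS * (B j)ᴴ) -
            ((∑ i, ∑ j, B i * ρS * (B j)ᴴ) + ∑ i, ∑ j, B j * ρS * (B i)ᴴ) := by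
          simp_rw [Finset.sum_sub_distrib, Finset.sum_add_distrib]
      _ = ((dk:ℂ) • ((dk:ℂ) • σ) + (dk:ℂ) • ((dk:ℂ) • σ)) - ((dk:ℂ) • γ + (dk:ℂ) • γ) := by
          rw [hdkσ, hγD]
          congr 1
          · congr 1
            · simp_rw [Finset.sum_const, Finset.card_univ, Fintype.card_fin,
                ← Nat.cast_smul_eq_nsmul ℂ, ← Finset.smul_sum]
            · rw [Finset.sum_comm]
              simp_rw [Finset.sum_const, Finset.card_univ, Fintype.card_fin,
                ← Nat.cast_smul_eq_nsmul ℂ, ← Finset.smul_sum]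
          · congr 1
            rw [Finset.sum_comm]
      _ = (2*(dk:ℂ)) • ((dk:ℂ) • σ - γ) := by module
  have hMpsd : ((dk:ℂ) • σ - γ).PosSemidef := by
    have hMeq : (dk:ℂ) • σ - γ =
        ∑ i, ∑ j, ((1/(2*(dk:ℝ)) : ℝ) : ℂ) • ((B i - B j) * ρS * (B i - B j)ᴴ) := by
      simp_rw [← Finset.smul_sum]
      rw [hscaled, smul_smul]
      rw [show (((1/(2*(dk:ℝ)) : ℝ) : ℂ) * (2*(dk:ℂ))) = 1 by push_cast; field_simp]
      rw [one_smul]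
    rw [hMeq]
    refine Finset.sum_induction _ _ (fun x y hx hy => hx.add hy) Matrix.PosSemidef.zero ?_
    intro i _
    refine Finset.sum_induction _ _ (fun x y hx hy => hx.add hy) Matrix.PosSemidef.zero ?_
    intro j _
    exact psd_smul (by positivity) (hρS.1.mul_mul_conjTranspose_same _)
  -- the hypothesis-testing set for σ
  set S : Set ℝ := {x : ℝ | ∃ Λ : Matrix (SIRSpace dk ds) (SIRSpace dk ds) ℂ,
      Λ.PosSemidef ∧ (1 - Λ).PosSemidef ∧
      1 - ε ≤ ((Λ * γ).trace).re ∧ x = ((Λ * σ).trace).re} with hSdef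
  have mem1 : (1 : ℝ) ∈ S := by
    refine ⟨1, Matrix.PosSemidef.one, by rw [sub_self]; exact Matrix.PosSemidef.zero, ?_, ?_⟩
    · rw [one_mul, hγtr]; simpa using hε.1
    · rw [one_mul, hσdens.2]; simp
  have hnn : ∀ x ∈ S, 0 ≤ x := by
    rintro x ⟨Λ, hΛ, -, -, rfl⟩
    exact (Complex.le_def.mp (psd_trace_mul_nonneg hΛ hσdens.1)).1
  -- the key bound:  every element of S is ≥ (1-ε)/dk
  have hbound : ∀ x ∈ S, (1 - ε)/dk ≤ x := by
    rintro x ⟨Λ, hΛ, -, hfeas, rfl⟩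
    have h0 := (Complex.le_def.mp (psd_trace_mul_nonneg hΛ hMpsd)).1
    have hexp : (Λ * ((dk:ℂ) • σ - γ)).trace = (dk:ℂ) * (Λ * σ).trace - (Λ * γ).trace := by
      rw [mul_sub, Matrix.trace_sub, mul_smul_comm, Matrix.trace_smul, smul_eq_mul]
    rw [hexp] at h0
    simp only [Complex.sub_re, Complex.mul_re, Complex.natCast_re, Complex.natCast_im,
      zero_mul, sub_zero, Complex.zero_re] at h0
    rw [div_le_iff₀ hdkR]
    nlinarith [hfeas]
  -- conclusion
  have hDh : Dh ε γ σ ≤ Real.logb 2 dk - Real.logb 2 (1 - ε) := by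
    rcases eq_or_lt_of_le hε.2 with heq | hlt
    · -- ε = 1
      have h0mem : (0 : ℝ) ∈ S := by
        refine ⟨0, Matrix.PosSemidef.zero, by rw [sub_zero]; exact Matrix.PosSemidef.one, ?_, ?_⟩
        · rw [zero_mul, Matrix.trace_zero, ← heq]; simp
        · rw [zero_mul, Matrix.trace_zero]; simp
      have hinf0 : sInf S = 0 :=
        le_antisymm (csInf_le ⟨0, hnn⟩ h0mem) (le_csInf ⟨0, h0mem⟩ hnn)
      rw [Dh, ← hSdef, hinf0, Real.logb_zero, neg_zero, ← heq, sub_self, Real.logb_zero,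
        sub_zero]
      exact Real.logb_nonneg one_lt_two (by exact_mod_cast hdk)
    · -- ε < 1
      have h1ε : (0:ℝ) < 1 - ε := by linarith
      have hsinf : (1 - ε)/dk ≤ sInf S := le_csInf ⟨1, mem1⟩ hbound
      have hpos : (0:ℝ) < (1 - ε)/dk := div_pos h1ε hdkR
      rw [Dh, ← hSdef]
      calc -Real.logb 2 (sInf S) ≤ -Real.logb 2 ((1 - ε)/dk) := by
            exact neg_le_neg (Real.logb_le_logb_of_le one_lt_two hpos hsinf)
        _ = Real.logb 2 dk - Real.logb 2 (1 - ε) := by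
            rw [Real.logb_div h1ε.ne' (ne_of_gt hdkR), neg_sub]
  refine le_trans (csInf_le ?_ ⟨σ, hσsep, rfl⟩) hDh
  refine ⟨0, ?_⟩
  rintro y ⟨σ', hsep', rfl⟩
  exact dh_nonneg hε.1 hγtr (isSeparable_density hsep')


end KeyCost
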